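/- Let A be a nontrivial additive subgroup of ℚ and let α > 0 be irrational. Define f_α : ℚ → ℝ by f_α(r) = r if r ≥ 0 and f_α(r) = -α·r if r < 0, and define a ≺_α b iff f_α(a) < f_α(b). Then ≺_α is a strict total order on A such that for all a,b ∈ A with b ≠ 0, either a ≺_α a+b or a ≺_α a-b. -/

import Mathlib

/-- For a nontrivial subgroup `A ≤ ℚ` and `α > 0` irrational, the relation
`a ≺_α b ↔ f_α a < f_α b`, where `f_α r = r` for `r ≥ 0` and `f_α r = -α r` for `r < 0`,
is a locally invariant total ordering of `A`. -/
theorem stmt6 (A : AddSubgroup ℚ) (hA : A ≠ ⊥)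
    (α : ℝ) (hirr : Irrational α) (hpos : 0 < α)
    (fα : ℚ → ℝ) (hf : ∀ r : ℚ, fα r = if 0 ≤ r then (r : ℝ) else -α * r) :
    (∀ a ∈ A, ¬ (fα a < fα a)) ∧
    (∀ a ∈ A, ∀ b ∈ A, ∀ c ∈ A, fα a < fα b → fα b < fα c → fα a < fα c) ∧
    (∀ a ∈ A, ∀ b ∈ A, a ≠ b → fα a < fα b ∨ fα b < fα a) ∧
    (∀ a ∈ A, ∀ b ∈ A, b ≠ 0 → fα a < fα (a + b) ∨ fα a < fα (a - b)) := by
  have hinj : ∀ a b : ℚ, fα a = fα b → a = b := by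
    intro a b hab
    rw [hf a, hf b] at hab
    by_cases ha : 0 ≤ a <;> by_cases hb : 0 ≤ b <;>
      simp only [ha, hb, if_true, if_false, ite_true, ite_false] at hab
    · exact_mod_cast hab
    · push_neg at hb
      have hbne : (b:ℝ) ≠ 0 := by exact_mod_cast hb.ne
      have heq : α = ((a / (-b) : ℚ) : ℝ) := by
        push_cast
        rw [eq_div_iff (neg_ne_zero.2 hbne)]
        linarith
      exact absurd ⟨a / (-b), heq.symm⟩ hirr
    · push_neg at ha
      have hane : (a:ℝ) ≠ 0 := by exact_mod_cast ha.ne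
      have heq : α = ((b / (-a) : ℚ) : ℝ) := by
        push_cast
        rw [eq_div_iff (neg_ne_zero.2 hane)]
        linarith
      exact absurd ⟨b / (-a), heq.symm⟩ hirr
    · have : (a:ℝ) = b := by
        have hα : α ≠ 0 := hpos.ne'
        field_simp at hab
        linarith
      exact_mod_cast this
  refine ⟨fun a _ => lt_irrefl _, fun a _ b _ c _ => lt_trans, ?_, ?_⟩
  · intro a _ b _ hne
    exact lt_or_gt_of_ne (fun h => hne (hinj a b h))
  · intro a _ b _ hb
    have key1 : ∀ x y : ℚ, 0 ≤ x → x < y → fα x < fα y := by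
      intro x y hx hxy
      rw [hf x, hf y, if_pos hx, if_pos (le_of_lt (lt_of_le_of_lt hx hxy))]
      exact_mod_cast hxy
    have key2 : ∀ x y : ℚ, x < 0 → y < x → fα x < fα y := by
      intro x y hx hyx
      rw [hf x, hf y, if_neg (not_le.2 hx), if_neg (not_le.2 (hyx.trans hx))]
      have : (y:ℝ) < x := by exact_mod_cast hyx
      nlinarith
    rcases lt_or_ge b 0 with hbneg | hbpos
    · rcases le_or_gt 0 a with ha | ha
      · exact Or.inr (key1 a (a - b) ha (by linarith))
      · exact Or.inl (key2 a (a + b) ha (by linarith))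
    · have hbpos' : 0 < b := lt_of_le_of_ne hbpos (Ne.symm hb)
      rcases le_or_gt 0 a with ha | ha
      · exact Or.inl (key1 a (a + b) ha (by linarith))
      · exact Or.inr (key2 a (a - b) ha (by linarith))
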